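/- Let S, B_i, B_j be subspaces of ℝ^N, and set A'_ij = B_i ⊓ (B_i ⊓ B_j)ᗮ, A'_ji = B_j ⊓ (B_i ⊓ B_j)ᗮ, W = S ⊓ (A'_ij)ᗮ and V = S ⊓ Wᗮ. If ⟨x, (P_{B_i} − P_{B_j})x⟩ > 0 for every nonzero x ∈ S, then W ≤ (A'_ji)ᗮ (indeed W is the trivial subspace) and ⟨x, (P_{A'_ij} − P_{A'_ji})x⟩ > 0 for every nonzero x ∈ V. -/

import Mathlib

/-- The orthogonal projection onto a subspace `S`, viewed as an endomorphism. -/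
noncomputable def projCLM {E : Type*} [NormedAddCommGroup E] [InnerProductSpace ℝ E]
    [FiniteDimensional ℝ E] (S : Submodule ℝ E) : E →L[ℝ] E :=
  S.subtypeL.comp (Submodule.orthogonalProjection S)

lemma projCLM_apply {E : Type*} [NormedAddCommGroup E] [InnerProductSpace ℝ E]
    [FiniteDimensional ℝ E] (S : Submodule ℝ E) (x : E) :
    projCLM S x = S.starProjection x := rfl

lemma projCLM_mem {E : Type*} [NormedAddCommGroup E] [InnerProductSpace ℝ E]
    [FiniteDimensional ℝ E] (S : Submodule ℝ E) (x : E) : projCLM S x ∈ S :=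
  (Submodule.orthogonalProjection S x).2

lemma inner_projCLM_self {E : Type*} [NormedAddCommGroup E] [InnerProductSpace ℝ E]
    [FiniteDimensional ℝ E] (K : Submodule ℝ E) (x : E) :
    (inner ℝ x (projCLM K x) : ℝ) = ‖projCLM K x‖ ^ 2 := by
  have h0 : (inner ℝ (x - projCLM K x) (projCLM K x) : ℝ) = 0 := by
    rw [real_inner_comm]
    exact (K.sub_starProjection_mem_orthogonal x) _ (projCLM_mem K x)
  have hx : x = (x - projCLM K x) + projCLM K x := by abel
  nth_rewrite 1 [hx]
  rw [inner_add_left, h0, real_inner_self_eq_norm_sq]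
  ring

lemma projCLM_eq_zero_of_mem_orthogonal {E : Type*} [NormedAddCommGroup E]
    [InnerProductSpace ℝ E] [FiniteDimensional ℝ E] (K : Submodule ℝ E) {x : E}
    (hx : x ∈ Kᗮ) : projCLM K x = 0 := by
  rw [projCLM_apply]
  exact K.eq_starProjection_of_mem_orthogonal K.zero_mem (by simpa using hx)

/-- If `C ≤ B` then the projection onto `B` splits as projection onto `C` plus
projection onto `B ⊓ Cᗮ`. -/
lemma projCLM_split {E : Type*} [NormedAddCommGroup E] [InnerProductSpace ℝ E]
    [FiniteDimensional ℝ E] {C B : Submodule ℝ E} (hCB : C ≤ B) (x : E) :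
    projCLM B x = projCLM C x + projCLM (B ⊓ Cᗮ) x := by
  set A := B ⊓ Cᗮ with hA
  have hPC := projCLM_mem C x
  have hPA := projCLM_mem A x
  have hPAC : projCLM A x ∈ Cᗮ := hPA.2
  have hPAB : projCLM A x ∈ B := hPA.1
  rw [projCLM_apply]
  apply B.eq_starProjection_of_mem_orthogonal
  · exact B.add_mem (hCB hPC) hPAB
  · intro b hb
    have hb' : b ∈ C ⊔ Cᗮ ⊓ B := by
      rw [Submodule.sup_orthogonal_inf_of_hasOrthogonalProjection hCB]; exact hb
    obtain ⟨c, hc, a, ha, rfl⟩ := Submodule.mem_sup.mp hb'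
    have ha' : a ∈ A := ⟨ha.2, ha.1⟩
    have h1 : (inner ℝ c (x - projCLM C x) : ℝ) = 0 := by
      rw [real_inner_comm]; exact C.starProjection_inner_eq_zero x c hc
    have h2 : (inner ℝ c (projCLM A x) : ℝ) = 0 := hPAC c hc
    have h3 : (inner ℝ a (x - projCLM A x) : ℝ) = 0 := by
      rw [real_inner_comm]; exact A.starProjection_inner_eq_zero x a ha'
    have h4 : (inner ℝ a (projCLM C x) : ℝ) = 0 := by
      rw [real_inner_comm]; exact ha.1 _ hPC
    have : (inner ℝ (c + a) (x - (projCLM C x + projCLM A x)) : ℝ) = 0 := by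
      have e1 : x - (projCLM C x + projCLM A x)
          = (x - projCLM C x) - projCLM A x := by abel
      have e2 : x - (projCLM C x + projCLM A x)
          = (x - projCLM A x) - projCLM C x := by abel
      rw [inner_add_left]
      nth_rewrite 1 [e1]
      nth_rewrite 1 [e2]
      simp only [inner_sub_right] at h1 h3 ⊢
      linarith
    simpa using this

/-- The proof step of Corollary 2 of the paper: if `⟨x, (P_{B_i} − P_{B_j})x⟩ > 0` for all
nonzero `x ∈ S`, then `W ≤ (A'_ji)ᗮ` (indeed `W = ⊥`) and
`⟨x, (P_{A'_ij} − P_{A'_ji})x⟩ > 0` for all nonzero `x ∈ V`. -/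
theorem corollary2_step
    (N : ℕ) (S Bi Bj : Submodule ℝ (EuclideanSpace ℝ (Fin N)))
    (Aij Aji W V : Submodule ℝ (EuclideanSpace ℝ (Fin N)))
    (hAij : Aij = Bi ⊓ (Bi ⊓ Bj)ᗮ) (hAji : Aji = Bj ⊓ (Bi ⊓ Bj)ᗮ)
    (hW : W = S ⊓ Aijᗮ) (hV : V = S ⊓ Wᗮ)
    (h : ∀ x ∈ S, x ≠ 0 → 0 < (inner ℝ x ((projCLM Bi - projCLM Bj) x) : ℝ)) :
    W ≤ Ajiᗮ ∧ W = ⊥ ∧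
      (∀ x ∈ V, x ≠ 0 → 0 < (inner ℝ x ((projCLM Aij - projCLM Aji) x) : ℝ)) := by
  set C := Bi ⊓ Bj with hC
  have hCi : C ≤ Bi := inf_le_left
  have hCj : C ≤ Bj := inf_le_right
  -- key identity
  have key : ∀ x, (inner ℝ x ((projCLM Bi - projCLM Bj) x) : ℝ)
      = (inner ℝ x ((projCLM Aij - projCLM Aji) x) : ℝ) := by
    intro x
    have e1 := projCLM_split hCi x
    have e2 := projCLM_split hCj x
    simp only [ContinuousLinearMap.sub_apply, hAij, hAji, e1, e2]
    rw [show projCLM C x + projCLM (Bi ⊓ Cᗮ) x - (projCLM C x + projCLM (Bj ⊓ Cᗮ) x)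
        = projCLM (Bi ⊓ Cᗮ) x - projCLM (Bj ⊓ Cᗮ) x by abel]
  have hWbot : W = ⊥ := by
    rw [Submodule.eq_bot_iff]
    intro x hx
    by_contra hx0
    rw [hW] at hx
    have hpos := h x hx.1 hx0
    rw [key] at hpos
    have hz : projCLM Aij x = 0 := projCLM_eq_zero_of_mem_orthogonal Aij hx.2
    rw [ContinuousLinearMap.sub_apply, inner_sub_right, hz, inner_zero_right,
      inner_projCLM_self] at hpos
    nlinarith [sq_nonneg ‖projCLM Aji x‖]
  refine ⟨hWbot ▸ bot_le, hWbot, ?_⟩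
  intro x hxV hx0
  have hxS : x ∈ S := by
    rw [hV] at hxV; exact hxV.1
  have := h x hxS hx0
  rwa [key] at this
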